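/- For fixed τ in the upper half-plane, integer a ≥ 0, s with Re(s) > 1 + a/2, and any nonzero integer n, the distribution relation holds: Σ_{t} K_a(s, τ, (z+t)/n, 0) = n^{2s-a} · K_a(s, τ, z, 0), where t ranges over a full set of representatives of (ℤ+ℤτ)/n(ℤ+ℤτ), i.e. t = j + kτ for j,k ∈ {0,...,n-1}, provided z ∉ ℤ+ℤτ. -/

import Mathlib

open Complex

/-- The Kronecker-Eisenstein series `K_a(s,τ,z,0)` (terms with `ω+z = 0` omitted). -/
noncomputable def kroneckerEisenstein (τ : ℂ) (a : ℤ) (s z : ℂ) : ℂ :=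
  ∑' p : ℤ × ℤ,
    if (p.1 : ℂ) + p.2 * τ + z = 0 then 0
    else (starRingEnd ℂ ((p.1 : ℂ) + p.2 * τ + z)) ^ a /
      ((‖(p.1 : ℂ) + p.2 * τ + z‖ : ℝ) : ℂ) ^ (2 * s)

/-- Lower bound for `|c + dτ|` in terms of `max |c| |d|`. -/
lemma KE_lowbound (τ : ℂ) (hτ : 0 < τ.im) :
    ∃ δ : ℝ, 0 < δ ∧ ∀ c d : ℝ, δ * max |c| |d| ≤ ‖(c : ℂ) + d * τ‖ := by
  refine ⟨min (1/2) (τ.im / (2 * (|τ.re| + 1))), lt_min (by norm_num) (by positivity), ?_⟩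
  intro c d
  set δ := min (1/2) (τ.im / (2 * (|τ.re| + 1))) with hδ
  have habsre : |((c : ℂ) + d * τ).re| ≤ ‖(c : ℂ) + d * τ‖ := Complex.abs_re_le_norm _
  have habsim : |((c : ℂ) + d * τ).im| ≤ ‖(c : ℂ) + d * τ‖ := Complex.abs_im_le_norm _
  have hre : ((c : ℂ) + d * τ).re = c + d * τ.re := by simp
  have him : ((c : ℂ) + d * τ).im = d * τ.im := by simp
  rw [hre] at habsre
  rw [him] at habsim
  rcases le_or_gt (|d| * (2 * (|τ.re| + 1))) |c| with h | h
  · -- max = |c|, use real part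
    have h1 : |d| ≤ |c| := le_trans (by nlinarith [abs_nonneg d, abs_nonneg τ.re]) h
    have h2 : |c + d * τ.re| ≥ |c| - |d| * |τ.re| := by
      have h' := abs_add_le (c + d * τ.re) (-(d * τ.re))
      rw [add_neg_cancel_right, abs_neg, abs_mul] at h'
      linarith
    have h3 : |d| * |τ.re| ≤ |c| / 2 := by nlinarith [abs_nonneg d]
    have h4 : δ * max |c| |d| ≤ (1/2) * |c| := by
      rw [max_eq_left h1]
      exact mul_le_mul_of_nonneg_right (min_le_left _ _) (abs_nonneg c)
    linarith
  · -- use imaginary part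
    have h1 : max |c| |d| ≤ |d| * (2 * (|τ.re| + 1)) := by
      refine max_le h.le ?_
      nlinarith [abs_nonneg d, abs_nonneg τ.re]
    have h2 : δ * max |c| |d| ≤ (τ.im / (2 * (|τ.re| + 1))) * (|d| * (2 * (|τ.re| + 1))) := by
      refine mul_le_mul (min_le_right _ _) h1 (le_trans (abs_nonneg c) (le_max_left _ _)) ?_
      positivity
    have h3 : (τ.im / (2 * (|τ.re| + 1))) * (|d| * (2 * (|τ.re| + 1))) = τ.im * |d| := by
      field_simp
    have h4 : τ.im * |d| = |d * τ.im| := by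
      rw [abs_mul, abs_of_pos hτ]; ring
    calc δ * max |c| |d| ≤ τ.im * |d| := by rw [← h3]; exact h2
    _ = |d * τ.im| := h4
    _ ≤ _ := habsim

/-- Summability of `max |q1| |q2| ^ (-k)` over `ℤ × ℤ`. -/
lemma KE_summable_max {k : ℝ} (hk : 2 < k) :
    Summable fun q : ℤ × ℤ => (max |(q.1 : ℝ)| |(q.2 : ℝ)|) ^ (-k) := by
  have h := EisensteinSeries.summable_one_div_norm_rpow hk
  rw [← (finTwoArrowEquiv ℤ).summable_iff]
  refine h.congr fun x => ?_
  simp only [Function.comp_apply, finTwoArrowEquiv_apply]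
  rw [EisensteinSeries.norm_eq_max_natAbs]
  congr 1
  rw [Nat.cast_max]
  congr 1 <;> rw [Nat.cast_natAbs] <;> simp

/-- Summability of the shifted lattice sum. -/
lemma KE_summable_shift (τ : ℂ) (hτ : 0 < τ.im) {k : ℝ} (hk : 2 < k) (z : ℂ) :
    Summable fun q : ℤ × ℤ => ‖(q.1 : ℂ) + q.2 * τ + z‖ ^ (-k) := by
  obtain ⟨δ, hδ, hbound⟩ := KE_lowbound τ hτ
  set β : ℝ := z.im / τ.im with hβ
  set α : ℝ := z.re - β * τ.re with hα
  have hzeq : z = (α : ℂ) + β * τ := by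
    apply Complex.ext <;> simp [hα, hβ] <;> field_simp
  set C : ℝ := max |α| |β| with hC
  have hCnn : 0 ≤ C := le_trans (abs_nonneg α) (le_max_left _ _)
  -- the exceptional set is finite
  have hfin : {q : ℤ × ℤ | ¬ (2*C+1 ≤ max |(q.1:ℝ)| |(q.2:ℝ)|)}.Finite := by
    apply Set.Finite.subset (Set.finite_Icc ((-⌈2*C+1⌉, -⌈2*C+1⌉) : ℤ × ℤ) (⌈2*C+1⌉, ⌈2*C+1⌉))
    intro q hq
    simp only [Set.mem_setOf_eq, not_le] at hq
    have h1 : |(q.1:ℝ)| ≤ 2*C+1 := le_trans (le_max_left _ _) hq.le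
    have h2 : |(q.2:ℝ)| ≤ 2*C+1 := le_trans (le_max_right _ _) hq.le
    have hc : (2*C+1 : ℝ) ≤ (⌈2*C+1⌉ : ℤ) := Int.le_ceil _
    constructor <;> constructor
    · exact_mod_cast neg_le_of_abs_le (h1.trans hc)
    · exact_mod_cast neg_le_of_abs_le (h2.trans hc)
    · exact_mod_cast le_of_abs_le (h1.trans hc)
    · exact_mod_cast le_of_abs_le (h2.trans hc)
  refine Summable.of_norm_bounded_eventually
    (g := fun q : ℤ × ℤ => (δ/2)^(-k) * (max |(q.1:ℝ)| |(q.2:ℝ)|) ^ (-k))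
    ((KE_summable_max hk).mul_left _) ?_
  rw [Filter.eventually_cofinite]
  refine Set.Finite.subset hfin ?_
  intro q hq
  simp only [Set.mem_setOf_eq] at hq ⊢
  intro hM
  apply hq
  -- main bound
  set M : ℝ := max |(q.1:ℝ)| |(q.2:ℝ)| with hM'
  have hM0 : (0:ℝ) < M := by linarith
  have hL : ‖(q.1 : ℂ) + q.2 * τ + z‖ ≥ δ/2 * M := by
    have he : (q.1 : ℂ) + q.2 * τ + z = (((q.1:ℝ) + α : ℝ) : ℂ) + (((q.2:ℝ) + β : ℝ)) * τ := by
      rw [hzeq]; push_cast; ring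
    rw [he]
    refine le_trans ?_ (hbound _ _)
    have hmax : M/2 ≤ max |(q.1:ℝ) + α| |(q.2:ℝ) + β| := by
      have hCa : |α| ≤ C := le_max_left _ _
      have hCb : |β| ≤ C := le_max_right _ _
      rcases max_cases |(q.1:ℝ)| |(q.2:ℝ)| with ⟨hm, _⟩ | ⟨hm, _⟩
      · refine le_trans ?_ (le_max_left _ _)
        have h' := abs_add_le ((q.1:ℝ) + α) (-α)
        rw [add_neg_cancel_right, abs_neg] at h'
        have hMq : M = |(q.1:ℝ)| := by rw [hM', hm]
        rw [hMq] at hM ⊢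
        linarith
      · refine le_trans ?_ (le_max_right _ _)
        have h' := abs_add_le ((q.2:ℝ) + β) (-β)
        rw [add_neg_cancel_right, abs_neg] at h'
        have hMq : M = |(q.2:ℝ)| := by rw [hM', hm]
        rw [hMq] at hM ⊢
        linarith
    calc δ/2 * M = δ * (M/2) := by ring
    _ ≤ δ * max |(q.1:ℝ) + α| |(q.2:ℝ) + β| := by
        exact mul_le_mul_of_nonneg_left hmax hδ.le
  have hpos : (0:ℝ) < δ/2 * M := by positivity
  have h1 : ‖(q.1 : ℂ) + q.2 * τ + z‖ ^ (-k) ≤ (δ/2 * M) ^ (-k) :=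
    Real.rpow_le_rpow_of_nonpos hpos hL (by linarith)
  have h2 : (δ/2 * M : ℝ) ^ (-k) = (δ/2)^(-k) * M ^ (-k) :=
    Real.mul_rpow (by positivity) hM0.le
  rw [Real.norm_eq_abs, _root_.abs_of_nonneg (Real.rpow_nonneg (norm_nonneg _) _)]
  rw [← h2]
  exact h1

/-- An equivalence `Fin n × ℤ ≃ ℤ`, `(j, p) ↦ n * p + j`. -/
def KE_equiv (n : ℕ) (hn : 0 < n) : Fin n × ℤ ≃ ℤ where
  toFun x := n * x.2 + x.1
  invFun m := (⟨(m % n).toNat, by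
    have h0 : (0:ℤ) < n := by exact_mod_cast hn
    have h1 := Int.emod_nonneg m (by exact_mod_cast hn.ne' : (n:ℤ) ≠ 0)
    have h2 := Int.emod_lt_of_pos m h0
    omega⟩, m / n)
  left_inv := by
    rintro ⟨j, p⟩
    have h0 : (0:ℤ) < n := by exact_mod_cast hn
    have hj0 : (0:ℤ) ≤ j := Int.ofNat_nonneg _
    have hjn : (j:ℤ) < n := by exact_mod_cast j.2
    have hmod : ((n:ℤ) * p + j) % n = j := by
      rw [add_comm, Int.add_mul_emod_self_left]
      exact Int.emod_eq_of_lt hj0 hjn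
    have hdiv : ((n:ℤ) * p + j) / n = p := by
      rw [add_comm, Int.add_mul_ediv_left _ _ (by exact_mod_cast hn.ne' : (n:ℤ) ≠ 0),
        Int.ediv_eq_zero_of_lt hj0 hjn, zero_add]
    simp only [Prod.mk.injEq]
    constructor
    · apply Fin.ext
      simp [hmod]
    · exact hdiv
  right_inv := by
    intro m
    have h0 : (0:ℤ) < n := by exact_mod_cast hn
    have h1 := Int.emod_nonneg m (by exact_mod_cast hn.ne' : (n:ℤ) ≠ 0)
    simp only
    rw [Int.toNat_of_nonneg h1]
    exact Int.mul_ediv_add_emod m n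

/-- Distribution relation:
`Σ_{t ∈ (ℤ+ℤτ)/n(ℤ+ℤτ)} K_a(s, τ, (z+t)/n, 0) = n^{2s-a} K_a(s, τ, z, 0)` for `z ∉ ℤ+ℤτ`. -/
theorem kroneckerEisenstein_distribution (τ : ℂ) (hτ : 0 < τ.im) (a : ℕ) (s : ℂ)
    (hs : 1 + (a : ℝ) / 2 < s.re) (n : ℕ) (hn : 0 < n) (z : ℂ)
    (hz : ∀ j k : ℤ, z ≠ (j : ℂ) + (k : ℂ) * τ) :
    ∑ j ∈ Finset.range n, ∑ k ∈ Finset.range n,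
        kroneckerEisenstein τ a s ((z + (j : ℂ) + (k : ℂ) * τ) / n) =
      (n : ℂ) ^ (2 * s - (a : ℂ)) * kroneckerEisenstein τ a s z := by
  have hn0 : (n : ℂ) ≠ 0 := Nat.cast_ne_zero.mpr hn.ne'
  have hnR : (0:ℝ) < n := Nat.cast_pos.mpr hn
  -- L never vanishes
  have hL : ∀ q : ℤ × ℤ, (q.1 : ℂ) + q.2 * τ + z ≠ 0 := by
    intro q h
    exact hz (-q.1) (-q.2) (by push_cast; linear_combination h)
  set g : ℤ × ℤ → ℂ := fun q =>
    (starRingEnd ℂ ((q.1 : ℂ) + q.2 * τ + z)) ^ (a:ℤ) /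
      ((‖(q.1 : ℂ) + q.2 * τ + z‖ : ℝ) : ℂ) ^ (2 * s) with hg
  -- summability
  have hk2 : (2:ℝ) < 2 * s.re - a := by linarith
  have hsum : Summable g := by
    apply Summable.of_norm
    refine (KE_summable_shift τ hτ hk2 z).congr fun q => ?_
    have hA : 0 < ‖(q.1 : ℂ) + q.2 * τ + z‖ := by
      simpa [norm_pos_iff] using hL q
    have h2re : (2 * s).re = 2 * s.re := by simp [Complex.mul_re]
    rw [hg]
    simp only [norm_div, norm_zpow, RCLike.norm_conj]
    rw [Complex.norm_cpow_eq_rpow_re_of_pos hA, h2re,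
      ← Real.rpow_intCast (‖_‖) (a:ℤ), ← Real.rpow_sub hA]
    congr 1
    push_cast
    ring
  -- rewrite RHS
  have hRHS : kroneckerEisenstein τ a s z = ∑' q, g q := by
    apply tsum_congr
    intro q
    rw [if_neg (hL q)]
  -- per-term identity for shifted series
  have key : ∀ j k : ℕ, j < n → k < n →
      kroneckerEisenstein τ a s ((z + (j : ℂ) + (k : ℂ) * τ) / n)
        = ∑' p : ℤ × ℤ, (n : ℂ) ^ (2 * s - (a:ℂ)) * g (n * p.1 + j, n * p.2 + k) := by
    intro j k hj hk
    apply tsum_congr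
    intro p
    set W : ℂ := ((n * p.1 + j : ℤ) : ℂ) + ((n * p.2 + k : ℤ) : ℂ) * τ + z with hW
    have hWne : W ≠ 0 := hL (n * p.1 + j, n * p.2 + k)
    have hAW : 0 < ‖W‖ := norm_pos_iff.mpr hWne
    have harg : (p.1 : ℂ) + p.2 * τ + (z + (j : ℂ) + (k : ℂ) * τ) / n = W / n := by
      rw [hW]; push_cast; field_simp; ring
    have h2s : ((n:ℂ) ^ (2*s)) ≠ 0 := by
      intro h
      exact hn0 ((Complex.cpow_eq_zero_iff _ _).mp h).1
    have hWa : ((‖W‖ : ℝ) : ℂ) ^ (2 * s) ≠ 0 := by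
      intro h
      have := ((Complex.cpow_eq_zero_iff _ _).mp h).1
      rw [Complex.ofReal_eq_zero] at this
      exact hAW.ne' this
    have hna : ((n:ℂ) ^ a) ≠ 0 := pow_ne_zero _ hn0
    have hcpow : ((‖W / n‖ : ℝ) : ℂ) ^ (2 * s)
        = ((‖W‖ : ℝ) : ℂ) ^ (2 * s) / (n : ℂ) ^ (2 * s) := by
      have habs : ‖W / n‖ = ‖W‖ / n := by
        rw [norm_div, Complex.norm_natCast]
      have h := Complex.mul_cpow_ofReal_nonneg (div_nonneg hAW.le hnR.le) hnR.le (2 * s)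
      rw [Complex.ofReal_natCast] at h
      rw [habs, eq_div_iff h2s, ← h]
      congr 1
      rw [← Complex.ofReal_natCast, ← Complex.ofReal_mul, div_mul_cancel₀ _ hnR.ne']
    have hconj : (starRingEnd ℂ (W / n)) ^ (a:ℤ) = (starRingEnd ℂ W) ^ (a:ℤ) / (n:ℂ) ^ (a:ℤ) := by
      rw [map_div₀, div_zpow]
      congr 2
      simp
    have hnpow : (n : ℂ) ^ (2 * s - (a:ℂ)) = (n : ℂ) ^ (2 * s) / (n : ℂ) ^ (a:ℕ) := by
      rw [Complex.cpow_sub _ _ hn0, Complex.cpow_natCast]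
    have hgval : g ((n:ℤ) * p.1 + (j:ℤ), (n:ℤ) * p.2 + (k:ℤ))
        = (starRingEnd ℂ) W ^ (a:ℤ) / ((‖W‖ : ℝ) : ℂ) ^ (2*s) := by
      rw [hg]
    rw [harg, if_neg (div_ne_zero hWne hn0), hconj, hcpow, hgval, hnpow]
    rw [zpow_natCast, zpow_natCast]
    field_simp
  -- reindexing
  set E : (Fin n × Fin n) × (ℤ × ℤ) ≃ ℤ × ℤ :=
    (Equiv.prodProdProdComm (Fin n) (Fin n) ℤ ℤ).trans
      (Equiv.prodCongr (KE_equiv n hn) (KE_equiv n hn)) with hE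
  have hEapp : ∀ (j k : Fin n) (p : ℤ × ℤ),
      E ((j, k), p) = (n * p.1 + (j : ℤ), n * p.2 + (k : ℤ)) := by
    intro j k p
    rfl
  have hsumE : Summable (g ∘ E) := hsum.comp_injective E.injective
  have hreindex : ∑ j ∈ Finset.range n, ∑ k ∈ Finset.range n,
      ∑' p : ℤ × ℤ, g (n * p.1 + (j:ℤ), n * p.2 + (k:ℤ)) = ∑' q, g q := by
    rw [← E.tsum_eq g]
    rw [Summable.tsum_prod' (f := fun c => g (E c)) hsumE (fun jk => hsum.comp_injective
      (i := fun p => E (jk, p)) (fun p p' h => by simpa using (E.injective h)))]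
    rw [tsum_fintype, Fintype.sum_prod_type]
    simp only [hEapp]
    rw [← Fin.sum_univ_eq_sum_range]
    refine Finset.sum_congr rfl fun j _ => ?_
    rw [← Fin.sum_univ_eq_sum_range]
  -- final assembly
  calc ∑ j ∈ Finset.range n, ∑ k ∈ Finset.range n,
        kroneckerEisenstein τ a s ((z + (j : ℂ) + (k : ℂ) * τ) / n)
      = ∑ j ∈ Finset.range n, ∑ k ∈ Finset.range n,
          ∑' p : ℤ × ℤ, (n : ℂ) ^ (2 * s - (a:ℂ)) * g (n * p.1 + (j:ℤ), n * p.2 + (k:ℤ)) := by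
        refine Finset.sum_congr rfl fun j hj => Finset.sum_congr rfl fun k hk => ?_
        exact key j k (Finset.mem_range.mp hj) (Finset.mem_range.mp hk)
    _ = (n : ℂ) ^ (2 * s - (a:ℂ)) * ∑ j ∈ Finset.range n, ∑ k ∈ Finset.range n,
          ∑' p : ℤ × ℤ, g (n * p.1 + (j:ℤ), n * p.2 + (k:ℤ)) := by
        simp_rw [tsum_mul_left, ← Finset.mul_sum]
    _ = (n : ℂ) ^ (2 * s - (a:ℂ)) * kroneckerEisenstein τ a s z := by
        rw [hreindex, hRHS]
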